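/- Let Q ⊆ ℤ^d be a saturated affine semigroup: Q = C ∩ ℤ^d where C ⊆ ℝ^d is the pointed real cone generated by vectors ρ_1,…,ρ_m ∈ ℤ^d, and suppose Q = {β ∈ ℤ^d : τ_i(β) ≥ 0 for all i = 1,…,n} for ℤ-linear functionals τ_1,…,τ_n. Let G = {Σ_i t_i ρ_i : 0 ≤ t_i ≤ 1} be the zonotope of the ρ_i. Then for every face F of Q and every a ∈ Q, each b ∈ Q with b ∉ a + F − Q can be written b = b₀ + q with q ∈ Q and b₀ a lattice point of (({x ∈ ℝ^d : τ_i(x) = τ_i(a)}) ∩ ℝ₊D) + G, for some index i with τ_i vanishing identically on F and some face D of Q with D ∩ (Q ∩ ker τ_i) = {0}. (In other words, the monomial ideal k{Q ∖ (a + F − Q)} is generated by monomials whose exponents are lattice points of finitely many explicitly described polytopes.) -/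

import Mathlib

open Pointwise

/-- Coercion of a lattice point in `ℤ^d` to a point of `ℝ^d`. -/
def toR {d : ℕ} (x : Fin d → ℤ) : Fin d → ℝ := fun i => (x i : ℝ)

/-- `F` is a face of the affine semigroup (given as a subset of `ℤ^d`) `Q`:
it is cut out of `Q` by a `ℤ`-linear functional that is nonnegative on `Q`. -/
def IsFaceOf {d : ℕ} (Q F : Set (Fin d → ℤ)) : Prop :=
  ∃ lam : (Fin d → ℤ) →ₗ[ℤ] ℤ, (∀ q ∈ Q, 0 ≤ lam q) ∧ F = {q | q ∈ Q ∧ lam q = 0}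

/-- The `ℝ`-linear extension of a `ℤ`-linear functional on `ℤ^d` to `ℝ^d`. -/
def extR {d : ℕ} (τ : (Fin d → ℤ) →ₗ[ℤ] ℤ) : (Fin d → ℝ) → ℝ :=
  fun y => ∑ i, y i * (τ (Pi.single i 1) : ℝ)

/-- `ℝ₊S`: the set of nonnegative real combinations of elements of `S ⊆ ℝ^d`. -/
def nonnegSpan {d : ℕ} (S : Set (Fin d → ℝ)) : Set (Fin d → ℝ) :=
  {y | ∃ (N : ℕ) (v : Fin N → (Fin d → ℝ)) (c : Fin N → ℝ),
    (∀ i, v i ∈ S) ∧ (∀ i, 0 ≤ c i) ∧ y = ∑ i, c i • v i}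

namespace Stmt4Aux

/-- rational version of `toR` -/
def toQ {d : ℕ} (x : Fin d → ℤ) : Fin d → ℚ := fun i => (x i : ℚ)

/-- rational version of `extR` -/
def extQ {d : ℕ} (τ : (Fin d → ℤ) →ₗ[ℤ] ℤ) : (Fin d → ℚ) → ℚ :=
  fun y => ∑ i, y i * (τ (Pi.single i 1) : ℚ)

variable {d : ℕ} (τ : (Fin d → ℤ) →ₗ[ℤ] ℤ)

lemma tau_eq_sum (w : Fin d → ℤ) : τ w = ∑ i, w i * τ (Pi.single i 1) := by
  conv_lhs => rw [pi_eq_sum_univ w, map_sum]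
  refine Finset.sum_congr rfl fun i _ => ?_
  rw [map_smul, smul_eq_mul]
  congr 2
  funext j
  simp [Pi.single_apply, eq_comm]

lemma extQ_toQ (w : Fin d → ℤ) : extQ τ (toQ w) = (τ w : ℚ) := by
  rw [tau_eq_sum τ w]; push_cast [extQ, toQ]; ring_nf

lemma extR_toR (w : Fin d → ℤ) : extR τ (toR w) = (τ w : ℝ) := by
  rw [tau_eq_sum τ w]; push_cast [extR, toR]; ring_nf

lemma extR_add (x y : Fin d → ℝ) : extR τ (x + y) = extR τ x + extR τ y := by
  simp [extR, add_mul, Finset.sum_add_distrib]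

lemma extR_smul (r : ℝ) (x : Fin d → ℝ) : extR τ (r • x) = r * extR τ x := by
  simp [extR, Finset.mul_sum, mul_assoc]

lemma extQ_add (x y : Fin d → ℚ) : extQ τ (x + y) = extQ τ x + extQ τ y := by
  simp [extQ, add_mul, Finset.sum_add_distrib]

lemma extQ_sub (x y : Fin d → ℚ) : extQ τ (x - y) = extQ τ x - extQ τ y := by
  simp [extQ, sub_mul, Finset.sum_sub_distrib]

lemma extQ_smul (r : ℚ) (x : Fin d → ℚ) : extQ τ (r • x) = r * extQ τ x := by
  simp [extQ, Finset.mul_sum, mul_assoc]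

lemma extQ_cast (x : Fin d → ℚ) :
    extR τ (fun k => (x k : ℝ)) = ((extQ τ x : ℚ) : ℝ) := by
  push_cast [extQ, extR]; rfl

lemma extR_zero : extR τ (0 : Fin d → ℝ) = 0 := by simp [extR]

lemma extR_sum_smul' {m : ℕ} (s : Finset (Fin m)) (t : Fin m → ℝ) (u : Fin m → (Fin d → ℝ)) :
    extR τ (∑ l ∈ s, t l • u l) = ∑ l ∈ s, t l * extR τ (u l) := by
  induction s using Finset.induction_on with
  | empty => simp [extR_zero]
  | insert _ _ h ih =>
    rw [Finset.sum_insert h, Finset.sum_insert h, extR_add, extR_smul, ih]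

lemma extR_sum_smul {m : ℕ} (t : Fin m → ℝ) (u : Fin m → (Fin d → ℝ)) :
    extR τ (∑ l, t l • u l) = ∑ l, t l * extR τ (u l) :=
  extR_sum_smul' τ Finset.univ t u

lemma toQ_cast (w : Fin d → ℤ) : (fun k => ((toQ w k : ℚ) : ℝ)) = toR w := by
  funext k; simp [toQ, toR]

lemma toR_inj {w : Fin d → ℤ} (h : toR w = 0) : w = 0 := by
  funext k
  have := congrFun h k
  simpa [toR] using this

lemma toR_sum_zsmul {m : ℕ} (c : Fin m → ℤ) (ρ : Fin m → (Fin d → ℤ)) :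
    toR (∑ l, c l • ρ l) = ∑ l, (c l : ℝ) • toR (ρ l) := by
  funext k
  simp [toR, Finset.sum_apply]

lemma toR_sub (x y : Fin d → ℤ) : toR (x - y) = toR x - toR y := by
  funext k; simp [toR]

lemma toR_neg (x : Fin d → ℤ) : toR (-x) = -toR x := by
  funext k; simp [toR]

lemma exists_nat_denom (x : Fin d → ℚ) :
    ∃ (M : ℕ) (u : Fin d → ℤ), 0 < M ∧ ∀ k, (u k : ℚ) = (M : ℚ) * x k := by
  classical
  refine ⟨∏ k, (x k).den, fun k => (((∏ k', (x k').den) / (x k).den : ℕ) : ℤ) * (x k).num,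
    Finset.prod_pos fun k _ => (x k).pos, fun k => ?_⟩
  have hdvd : (x k).den ∣ ∏ k', (x k').den := Finset.dvd_prod_of_mem _ (Finset.mem_univ k)
  have hden : ((x k).den : ℚ) ≠ 0 := Nat.cast_ne_zero.mpr (x k).den_nz
  have h1 : ((x k).num : ℚ) = (x k) * (x k).den := by
    rw [mul_comm, ← Rat.den_mul_eq_num]
  have h2 : (((∏ k', (x k').den) / (x k).den : ℕ) : ℚ) * ((x k).den : ℚ)
      = ((∏ k', (x k').den : ℕ) : ℚ) := by
    rw [← Nat.cast_mul, Nat.div_mul_cancel hdvd]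
  simp only []
  rw [Int.cast_mul, Int.cast_natCast, h1]
  calc (((∏ k', (x k').den) / (x k).den : ℕ) : ℚ) * ((x k) * (x k).den)
      = ((((∏ k', (x k').den) / (x k).den : ℕ) : ℚ) * ((x k).den : ℚ)) * x k := by ring
    _ = ((∏ k', (x k').den : ℕ) : ℚ) * x k := by rw [h2]
    _ = _ := rfl

end Stmt4Aux

open Stmt4Aux

/-- Let `Q = C ∩ ℤ^d` be a saturated affine semigroup, presented also
as `Q = {β : τ_i(β) ≥ 0 ∀ i}`, with zonotope `G` of the cone generators.  For a face `F`
of `Q` and `a ∈ Q`, every `b ∈ Q` with `b ∉ a + F − Q` can be written `b = b₀ + q` with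
`q ∈ Q` and `b₀` a lattice point of `({τ_i = τ_i(a)} ∩ ℝ₊D) + G` for some `i` with
`τ_i|_F = 0` and some face `D` of `Q` with `D ∩ (Q ∩ ker τ_i) = {0}`. -/
theorem stmt4 {d m n : ℕ} (ρ : Fin m → (Fin d → ℤ))
    (C : Set (Fin d → ℝ))
    (hC : C = {y | ∃ c : Fin m → ℝ, (∀ i, 0 ≤ c i) ∧ y = ∑ i, c i • toR (ρ i)})
    (hpointed : C ∩ (-C) = {0})
    (Q : Set (Fin d → ℤ)) (hQ : Q = {q | toR q ∈ C})
    (τ : Fin n → ((Fin d → ℤ) →ₗ[ℤ] ℤ))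
    (hQτ : Q = {β | ∀ i, 0 ≤ τ i β})
    (G : Set (Fin d → ℝ))
    (hG : G = {y | ∃ t : Fin m → ℝ, (∀ i, 0 ≤ t i ∧ t i ≤ 1) ∧ y = ∑ i, t i • toR (ρ i)})
    (F : Set (Fin d → ℤ)) (hF : IsFaceOf Q F)
    (a : Fin d → ℤ) (ha : a ∈ Q)
    (b : Fin d → ℤ) (hb : b ∈ Q) (hbF : b ∉ a +ᵥ (F - Q)) :
    ∃ i : Fin n, (∀ f ∈ F, τ i f = 0) ∧
      ∃ D : Set (Fin d → ℤ), IsFaceOf Q D ∧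
        D ∩ {q | q ∈ Q ∧ τ i q = 0} = {0} ∧
        ∃ (b₀ : Fin d → ℤ) (q : Fin d → ℤ), q ∈ Q ∧ b = b₀ + q ∧
          toR b₀ ∈ ({x | extR (τ i) x = (τ i a : ℝ)} ∩ nonnegSpan (toR '' D)) + G := by
  classical
  have hQmem : ∀ z : Fin d → ℤ, z ∈ Q ↔ ∀ j, 0 ≤ τ j z := by
    intro z; rw [hQτ]; exact Iff.rfl
  have hzeroQ : (0 : Fin d → ℤ) ∈ Q := (hQmem 0).mpr (by simp)
  have hQneg : ∀ z : Fin d → ℤ, z ∈ Q → -z ∈ Q → z = 0 := by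
    intro z h1 h2
    rw [hQ] at h1 h2
    have : toR z ∈ C ∩ (-C) := ⟨h1, by simpa [Set.mem_neg, toR_neg] using h2⟩
    rw [hpointed] at this
    exact toR_inj this
  have hρQ : ∀ l, ρ l ∈ Q := by
    intro l
    rw [hQ]
    show toR (ρ l) ∈ C
    rw [hC]
    refine ⟨Pi.single l 1, fun j => ?_, ?_⟩
    · rcases eq_or_ne j l with h | h <;> simp [Pi.single_apply, h]
    · simp [Pi.single_apply, ite_smul]
  have hτρ : ∀ j l, 0 ≤ τ j (ρ l) := fun j l => (hQmem _).mp (hρQ l) j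
  have hFQ : ∀ f ∈ F, f ∈ Q := by
    obtain ⟨lam, _, hlamF⟩ := hF
    intro f hf; rw [hlamF] at hf; exact hf.1
  -- Part 1 : find i with τ i vanishing on F and τ i a < τ i b
  have part1 : ∃ i, (∀ f ∈ F, τ i f = 0) ∧ τ i a < τ i b := by
    by_contra hcon
    push_neg at hcon
    obtain ⟨lam, hlamQ, hlamF⟩ := hF
    set S : Finset (Fin n) := Finset.univ.filter (fun j => ∃ f ∈ F, 0 < τ j f) with hS
    have hgex : ∀ j : Fin n, ∃ f : Fin d → ℤ, j ∈ S → (f ∈ F ∧ 0 < τ j f) := by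
      intro j
      by_cases h : j ∈ S
      · obtain ⟨f, hf1, hf2⟩ := (Finset.mem_filter.mp h).2
        exact ⟨f, fun _ => ⟨hf1, hf2⟩⟩
      · exact ⟨0, fun h' => absurd h' h⟩
    choose g hg using hgex
    have hvanish : ∀ j, j ∉ S → ∀ f ∈ F, τ j f = 0 := by
      intro j hj f hf
      have h1 : ¬ (0 < τ j f) := by
        intro h
        exact hj (Finset.mem_filter.mpr ⟨Finset.mem_univ j, ⟨f, hf, h⟩⟩)
      have h2 : 0 ≤ τ j f := (hQmem f).mp (hFQ f hf) j
      omega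
    set f : Fin d → ℤ := ∑ j ∈ S, g j with hfdef
    have hfQ : f ∈ Q := by
      rw [hQmem]
      intro k
      rw [hfdef, map_sum]
      exact Finset.sum_nonneg fun j hj => (hQmem _).mp (hFQ _ (hg j hj).1) k
    have hfF : f ∈ F := by
      rw [hlamF]
      refine ⟨hfQ, ?_⟩
      rw [hfdef, map_sum]
      refine Finset.sum_eq_zero fun j hj => ?_
      have := (hg j hj).1
      rw [hlamF] at this
      exact this.2
    have hfS : ∀ j ∈ S, 1 ≤ τ j f := by
      intro j hj
      rw [hfdef, map_sum]
      have h1 : τ j (g j) ≤ ∑ k ∈ S, τ j (g k) :=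
        Finset.single_le_sum (fun k hk => (hQmem _).mp (hFQ _ (hg k hk).1) j) hj
      have h2 : 0 < τ j (g j) := (hg j hj).2
      omega
    have hfS' : ∀ j, j ∉ S → τ j f = 0 := by
      intro j hj
      exact hvanish j hj f hfF
    set N : ℕ := Finset.univ.sup (fun j => (τ j b - τ j a).toNat) with hN
    have hNfF : (N : ℕ) • f ∈ F := by
      rw [hlamF]
      constructor
      · rw [hQmem]
        intro k
        rw [map_nsmul]
        have := (hQmem f).mp hfQ k
        positivity
      · rw [map_nsmul]
        have : lam f = 0 := by rw [hlamF] at hfF; exact hfF.2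
        simp [this]
    set q' : Fin d → ℤ := a + N • f - b with hq'
    have hq'Q : q' ∈ Q := by
      rw [hQmem]
      intro j
      have hτq' : τ j q' = τ j a + (N : ℤ) * τ j f - τ j b := by
        rw [hq', map_sub, map_add, map_nsmul, nsmul_eq_mul]
      rw [hτq']
      by_cases hj : j ∈ S
      · have h1 : (τ j b - τ j a) ≤ (N : ℤ) := by
          have := Finset.le_sup (f := fun j => (τ j b - τ j a).toNat) (Finset.mem_univ j)
          have h2 : (((τ j b - τ j a).toNat : ℤ)) ≤ (N : ℤ) := by exact_mod_cast this
          omega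
        have h2 : (N : ℤ) ≤ (N : ℤ) * τ j f :=
          le_mul_of_one_le_right (by positivity) (hfS j hj)
        linarith
      · have h1 : τ j b ≤ τ j a := hcon j (hvanish j hj)
        have h2 : τ j f = 0 := hfS' j hj
        rw [h2, mul_zero]
        omega
    apply hbF
    refine Set.mem_vadd_set.mpr ⟨N • f - q', Set.sub_mem_sub hNfF hq'Q, ?_⟩
    show a + (N • f - q') = b
    rw [hq']
    ring
  obtain ⟨i, hiF, hib⟩ := part1
  set α : ℤ := τ i a with hαdef
  have hα : 0 ≤ α := (hQmem a).mp ha i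
  -- greedy: minimal b₀
  set Λ : (Fin d → ℤ) →ₗ[ℤ] ℤ := ∑ j, τ j with hΛ
  have hΛapp : ∀ z, Λ z = ∑ j, τ j z := by
    intro z; rw [hΛ]; simp
  have hΛQ : ∀ z ∈ Q, 0 ≤ Λ z := by
    intro z hz; rw [hΛapp]
    exact Finset.sum_nonneg fun j _ => (hQmem z).mp hz j
  have hΛ0 : ∀ z ∈ Q, Λ z = 0 → z = 0 := by
    intro z hz h0
    have hall : ∀ j, τ j z = 0 := by
      intro j
      have := (Finset.sum_eq_zero_iff_of_nonneg
        (fun j _ => (hQmem z).mp hz j)).mp (by rw [← hΛapp]; exact h0)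
      exact this j (Finset.mem_univ j)
    exact hQneg z hz ((hQmem _).mpr fun j => by simp [hall j])
  have greedy : ∃ zs : Fin d → ℤ, zs ∈ Q ∧ b - zs ∈ Q ∧ α ≤ τ i (b - zs) ∧
      ∀ p, p ∈ Q → (b - zs) - p ∈ Q → α ≤ τ i ((b - zs) - p) → p = 0 := by
    set T : Set (Fin d → ℤ) := {z | z ∈ Q ∧ b - z ∈ Q ∧ α ≤ τ i (b - z)} with hT
    have h0T : (0 : Fin d → ℤ) ∈ T := by
      refine ⟨hzeroQ, by simpa using hb, by simpa using hib.le⟩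
    have hbound : ∀ z ∈ T, Λ z ≤ Λ b := by
      intro z hz
      have h1 : 0 ≤ Λ (b - z) := hΛQ _ hz.2.1
      have h2 : Λ b = Λ z + Λ (b - z) := by
        rw [← map_add]
        congr 1
        ring
      omega
    set V : Set ℕ := {k | ∃ z ∈ T, (Λ z).toNat = k} with hV
    have hVne : V.Nonempty := ⟨(Λ (0 : Fin d → ℤ)).toNat, 0, h0T, rfl⟩
    have hVbdd : BddAbove V := by
      refine ⟨(Λ b).toNat, fun k hk => ?_⟩
      obtain ⟨z, hzT, hzk⟩ := hk
      rw [← hzk]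
      exact Int.toNat_le_toNat (hbound z hzT)
    obtain ⟨zs, hzsT, hzsmax⟩ : ∃ zs ∈ T, (Λ zs).toNat = sSup V := Nat.sSup_mem hVne hVbdd
    refine ⟨zs, hzsT.1, hzsT.2.1, hzsT.2.2, ?_⟩
    intro p hpQ hpQ2 hpτ
    have hzpT : zs + p ∈ T := by
      refine ⟨(hQmem _).mpr fun j => ?_, ?_, ?_⟩
      · rw [map_add]
        have := (hQmem _).mp hzsT.1 j
        have := (hQmem _).mp hpQ j
        omega
      · have : b - (zs + p) = (b - zs) - p := by ring
        rw [this]; exact hpQ2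
      · have : b - (zs + p) = (b - zs) - p := by ring
        rw [this]; exact hpτ
    have hle : (Λ (zs + p)).toNat ≤ sSup V := le_csSup hVbdd ⟨zs + p, hzpT, rfl⟩
    rw [← hzsmax] at hle
    have h1 : 0 ≤ Λ zs := hΛQ _ hzsT.1
    have h2 : 0 ≤ Λ p := hΛQ _ hpQ
    have h3 : Λ (zs + p) = Λ zs + Λ p := map_add _ _ _
    have h4 : Λ (zs + p) ≤ Λ zs := by omega
    exact hΛ0 p hpQ (by omega)
  obtain ⟨zs, hzsQ, hb₀Q, hb₀τ, hmin⟩ := greedy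
  set b₀ : Fin d → ℤ := b - zs with hb₀def
  -- choose x in P with maximal active set
  set yq : Fin d → ℚ := toQ b₀ with hyq
  set P : Set (Fin d → ℚ) := {x | (∀ j, 0 ≤ extQ (τ j) x) ∧ extQ (τ i) x = (α : ℚ) ∧
      ∀ j, 0 ≤ extQ (τ j) (yq - x)} with hP
  set J : (Fin d → ℚ) → Finset (Fin n) :=
      fun x => Finset.univ.filter (fun j => extQ (τ j) x = 0) with hJ
  have hx₀P : ((α : ℚ) / (τ i b₀ : ℚ)) • yq ∈ P := by
    set s : ℚ := (α : ℚ) / (τ i b₀ : ℚ) with hs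
    have hb₀i : (0 : ℚ) ≤ (τ i b₀ : ℚ) := by exact_mod_cast le_trans hα hb₀τ
    have hs0 : 0 ≤ s := div_nonneg (by exact_mod_cast hα) hb₀i
    have hs1 : s ≤ 1 := by
      rcases eq_or_lt_of_le hb₀i with h | h
      · rw [hs, ← h]; simp
      · rw [hs, div_le_one h]; exact_mod_cast hb₀τ
    have hyqval : ∀ j, extQ (τ j) yq = (τ j b₀ : ℚ) := fun j => extQ_toQ (τ j) b₀
    refine ⟨fun j => ?_, ?_, fun j => ?_⟩
    · rw [extQ_smul, hyqval]
      have : (0:ℚ) ≤ (τ j b₀ : ℚ) := by exact_mod_cast (hQmem _).mp hb₀Q j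
      positivity
    · rw [extQ_smul, hyqval]
      rcases eq_or_lt_of_le hb₀i with h | h
      · have hint : τ i b₀ = 0 := by exact_mod_cast h.symm
        have hα0 : α = 0 := by have := hb₀τ; omega
        rw [← h, hα0]
        simp
      · rw [hs, div_mul_cancel₀]
        exact ne_of_gt h
    · rw [extQ_sub, extQ_smul, hyqval]
      have h1 : (0:ℚ) ≤ (τ j b₀ : ℚ) := by exact_mod_cast (hQmem _).mp hb₀Q j
      nlinarith [mul_nonneg (sub_nonneg.mpr hs1) h1]
  -- choose x with maximal active set
  set V2 : Set ℕ := {k | ∃ x ∈ P, (J x).card = k} with hV2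
  have hV2ne : V2.Nonempty := ⟨_, _, hx₀P, rfl⟩
  have hV2bdd : BddAbove V2 := by
    refine ⟨n, ?_⟩
    rintro k ⟨x, -, rfl⟩
    simpa using Finset.card_filter_le Finset.univ (fun j => extQ (τ j) x = 0)
  obtain ⟨x, hxP, hxcard⟩ : ∃ x ∈ P, (J x).card = sSup V2 := Nat.sSup_mem hV2ne hV2bdd
  have hxmax : ∀ x' ∈ P, (J x').card ≤ (J x).card := by
    intro x' hx'
    rw [hxcard]
    exact le_csSup hV2bdd ⟨x', hx', rfl⟩
  obtain ⟨hxnn, hxi, hyx⟩ := hxP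
  have hJmem : ∀ (y : Fin d → ℚ) (j : Fin n), j ∈ J y ↔ extQ (τ j) y = 0 := by
    intro y j
    rw [hJ]
    simp
  set lamD : (Fin d → ℤ) →ₗ[ℤ] ℤ := ∑ j ∈ J x, τ j with hlamD
  have hlamDapp : ∀ z, lamD z = ∑ j ∈ J x, τ j z := by
    intro z; rw [hlamD]; simp
  set D : Set (Fin d → ℤ) := {q | q ∈ Q ∧ lamD q = 0} with hD
  have hDface : IsFaceOf Q D :=
    ⟨lamD, fun q hq => by
      rw [hlamDapp]; exact Finset.sum_nonneg fun j _ => (hQmem q).mp hq j, rfl⟩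
  have hDmem : ∀ z, z ∈ D ↔ z ∈ Q ∧ ∀ j ∈ J x, τ j z = 0 := by
    intro z
    constructor
    · rintro ⟨h1, h2⟩
      refine ⟨h1, ?_⟩
      exact (Finset.sum_eq_zero_iff_of_nonneg (fun j _ => (hQmem z).mp h1 j)).mp
        (by rw [← hlamDapp]; exact h2)
    · rintro ⟨h1, h2⟩
      exact ⟨h1, by rw [hlamDapp]; exact Finset.sum_eq_zero h2⟩
  -- goodness of D
  have hgood : D ∩ {q | q ∈ Q ∧ τ i q = 0} = {0} := by
    ext z
    simp only [Set.mem_inter_iff, Set.mem_setOf_eq, Set.mem_singleton_iff]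
    constructor
    · rintro ⟨hzD, hzQ2, hzi⟩
      obtain ⟨-, hzJ⟩ := (hDmem z).mp hzD
      by_contra hz0
      have hzτ : ∀ j, 0 ≤ τ j z := (hQmem z).mp hzQ2
      have hpos : ∃ j₀, 0 < τ j₀ z := by
        by_contra hno
        push_neg at hno
        have hall : ∀ j, τ j z = 0 := fun j => le_antisymm (hno j) (hzτ j)
        exact hz0 (hQneg z hzQ2 ((hQmem _).mpr fun j => by simp [hall j]))
      set Pos : Finset (Fin n) := Finset.univ.filter (fun j => 0 < τ j z) with hPos
      have hPosmem : ∀ j, j ∈ Pos ↔ 0 < τ j z := by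
        intro j; rw [hPos]; simp
      have hPosne : Pos.Nonempty := by
        obtain ⟨j₀, hj₀⟩ := hpos
        exact ⟨j₀, (hPosmem j₀).mpr hj₀⟩
      set ε : ℚ := Pos.inf' hPosne (fun j => extQ (τ j) x / (τ j z : ℚ)) with hε
      have hposx : ∀ j ∈ Pos, 0 < extQ (τ j) x := by
        intro j hj
        have hjz : 0 < τ j z := (hPosmem j).mp hj
        have hjnJ : j ∉ J x := by
          intro hjJ
          have := hzJ j hjJ
          omega
        have hne : extQ (τ j) x ≠ 0 := fun h0 => hjnJ ((hJmem x j).mpr h0)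
        exact lt_of_le_of_ne (hxnn j) (Ne.symm hne)
      have hε0 : 0 < ε := by
        rw [hε, Finset.lt_inf'_iff]
        intro j hj
        have h1 := hposx j hj
        have h2 : (0:ℚ) < (τ j z : ℚ) := by exact_mod_cast (hPosmem j).mp hj
        positivity
      set x' : Fin d → ℚ := x - ε • toQ z with hx'
      have hx'val : ∀ j, extQ (τ j) x' = extQ (τ j) x - ε * (τ j z : ℚ) := by
        intro j
        rw [hx', extQ_sub, extQ_smul, extQ_toQ]
      have hx'P : x' ∈ P := by
        refine ⟨fun j => ?_, ?_, fun j => ?_⟩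
        · rw [hx'val]
          by_cases hj : 0 < τ j z
          · have hjP : j ∈ Pos := (hPosmem j).mpr hj
            have hle : ε ≤ extQ (τ j) x / (τ j z : ℚ) := by
              rw [hε]; exact Finset.inf'_le _ hjP
            have h2 : (0:ℚ) < (τ j z : ℚ) := by exact_mod_cast hj
            rw [sub_nonneg]
            calc ε * (τ j z : ℚ) ≤ (extQ (τ j) x / (τ j z : ℚ)) * (τ j z : ℚ) :=
                  mul_le_mul_of_nonneg_right hle h2.le
              _ = extQ (τ j) x := div_mul_cancel₀ _ (ne_of_gt h2)
          · have h0 : τ j z = 0 := le_antisymm (not_lt.mp hj) (hzτ j)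
            rw [h0]
            simpa using hxnn j
        · rw [hx'val, hzi]
          simpa using hxi
        · have e1 := extQ_sub (τ j) yq x'
          have e2 := extQ_sub (τ j) yq x
          have e3 := hx'val j
          have h1 := hyx j
          have h2 : (0:ℚ) ≤ (τ j z : ℚ) := by exact_mod_cast hzτ j
          linarith [mul_nonneg hε0.le h2]
      obtain ⟨js, hjs, hjse⟩ :=
        Finset.exists_mem_eq_inf' hPosne (fun j => extQ (τ j) x / (τ j z : ℚ))
      have hjsz : (0:ℚ) < (τ js z : ℚ) := by exact_mod_cast (hPosmem js).mp hjs
      have hjsJ : js ∈ J x' := by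
        refine (hJmem x' js).mpr ?_
        rw [hx'val, hε, hjse, div_mul_cancel₀ _ (ne_of_gt hjsz), sub_self]
      have hjsnJ : js ∉ J x := by
        intro h
        exact absurd ((hJmem x js).mp h) (ne_of_gt (hposx js hjs))
      have hsub : J x ⊆ J x' := by
        intro j hj
        refine (hJmem x' j).mpr ?_
        rw [hx'val, (hJmem x j).mp hj]
        have h0 : τ j z = 0 := hzJ j hj
        rw [h0]
        ring
      have hss : J x ⊂ J x' := (Finset.ssubset_iff_of_subset hsub).mpr ⟨js, hjsJ, hjsnJ⟩
      have hlt := Finset.card_lt_card hss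
      have hle := hxmax x' hx'P
      omega
    · rintro rfl
      exact ⟨⟨hzeroQ, map_zero _⟩, hzeroQ, map_zero _⟩
  -- the lattice point from x
  obtain ⟨N1, w, hN1, hw⟩ := exists_nat_denom x
  have htoQw : toQ w = (N1 : ℚ) • x := by
    funext k
    exact hw k
  have hwval : ∀ j, (τ j w : ℚ) = (N1:ℚ) * extQ (τ j) x := by
    intro j
    rw [← extQ_toQ, htoQw, extQ_smul]
  have hwQ : w ∈ Q := by
    rw [hQmem]
    intro j
    have h2 : (0:ℚ) ≤ (τ j w : ℚ) := by
      rw [hwval]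
      have := hxnn j
      positivity
    exact_mod_cast h2
  have hwD : w ∈ D := by
    refine (hDmem w).mpr ⟨hwQ, fun j hj => ?_⟩
    have h0 : extQ (τ j) x = 0 := (hJmem x j).mp hj
    have h1 : (τ j w : ℚ) = 0 := by rw [hwval, h0, mul_zero]
    exact_mod_cast h1
  set xR : Fin d → ℝ := fun k => ((x k : ℚ) : ℝ) with hxR
  have hN1R : (0:ℝ) < (N1:ℝ) := by exact_mod_cast hN1
  have hxRspan : xR ∈ nonnegSpan (toR '' D) := by
    refine ⟨1, fun _ => toR w, fun _ => 1/(N1:ℝ), fun _ => ⟨w, hwD, rfl⟩,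
      fun _ => by positivity, ?_⟩
    rw [Fin.sum_univ_one]
    funext k
    have h1 : ((w k : ℤ) : ℝ) = (N1:ℝ) * ((x k : ℚ) : ℝ) := by
      exact_mod_cast congrArg (fun q : ℚ => (q : ℝ)) (hw k)
    show ((x k : ℚ) : ℝ) = (1/(N1:ℝ)) * ((w k : ℤ) : ℝ)
    rw [h1]
    field_simp
  have hxRH : extR (τ i) xR = (α : ℝ) := by
    rw [hxR, extQ_cast, hxi]
    push_cast
    ring
  -- decompose the remainder
  set wq : Fin d → ℚ := yq - x with hwq
  obtain ⟨M, u, hM, hu⟩ := exists_nat_denom wq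
  have hMR : (0:ℝ) < (M:ℝ) := by exact_mod_cast hM
  have htoQu : toQ u = (M : ℚ) • wq := by
    funext k
    exact hu k
  have huval : ∀ j, (τ j u : ℚ) = (M:ℚ) * extQ (τ j) wq := by
    intro j
    rw [← extQ_toQ, htoQu, extQ_smul]
  have huQ : u ∈ Q := by
    rw [hQmem]
    intro j
    have h2 : (0:ℚ) ≤ (τ j u : ℚ) := by
      rw [huval]
      have := hyx j
      positivity
    exact_mod_cast h2
  have huC : toR u ∈ C := by
    rw [hQ] at huQ
    exact huQ
  rw [hC] at huC
  obtain ⟨c, hc0, hcu⟩ := huC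
  set e : Fin m → ℝ := fun l => c l / (M:ℝ) with he
  have he0 : ∀ l, 0 ≤ e l := fun l => div_nonneg (hc0 l) hMR.le
  set wqR : Fin d → ℝ := fun k => ((wq k : ℚ) : ℝ) with hwqR
  have hwqRsum : wqR = ∑ l, e l • toR (ρ l) := by
    funext k
    have h1 : ((u k : ℤ) : ℝ) = (M:ℝ) * wqR k := by
      show ((u k : ℤ) : ℝ) = (M:ℝ) * ((wq k : ℚ) : ℝ)
      exact_mod_cast congrArg (fun q : ℚ => (q : ℝ)) (hu k)
    have h2 : ((u k : ℤ) : ℝ) = ∑ l, c l * toR (ρ l) k := by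
      have h := congrFun hcu k
      rw [Finset.sum_apply] at h
      simpa [toR] using h
    have h3 : wqR k = (∑ l, c l * toR (ρ l) k) / (M:ℝ) := by
      rw [← h2, eq_div_iff (ne_of_gt hMR)]
      linarith [h1]
    rw [Finset.sum_apply, h3, Finset.sum_div]
    refine Finset.sum_congr rfl fun l _ => ?_
    show c l * toR (ρ l) k / (M:ℝ) = e l * toR (ρ l) k
    have hel : e l = c l / (M:ℝ) := rfl
    rw [hel]
    ring
  set z₀ : Fin d → ℤ := ∑ l, ⌊e l⌋ • ρ l with hz₀
  set g : Fin d → ℝ := ∑ l, Int.fract (e l) • toR (ρ l) with hg'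
  have hgG : g ∈ G := by
    rw [hG]
    exact ⟨fun l => Int.fract (e l),
      fun l => ⟨Int.fract_nonneg _, (Int.fract_lt_one _).le⟩, rfl⟩
  have hsplit2 : wqR = toR z₀ + g := by
    rw [hwqRsum, hz₀, hg', toR_sum_zsmul, ← Finset.sum_add_distrib]
    refine Finset.sum_congr rfl fun l _ => ?_
    rw [← add_smul, Int.floor_add_fract]
  have hz₀Q : z₀ ∈ Q := by
    rw [hQ]
    show toR z₀ ∈ C
    rw [hC]
    refine ⟨fun l => (⌊e l⌋ : ℝ), fun l => ?_, ?_⟩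
    · show (0:ℝ) ≤ ((⌊e l⌋ : ℤ) : ℝ)
      have : (0:ℤ) ≤ ⌊e l⌋ := Int.floor_nonneg.mpr (he0 l)
      exact_mod_cast this
    · rw [hz₀]
      exact toR_sum_zsmul _ _
  have hbsplit : toR b₀ = xR + wqR := by
    funext k
    show ((b₀ k : ℤ) : ℝ) = ((x k : ℚ) : ℝ) + ((wq k : ℚ) : ℝ)
    have h1 : wq k = (b₀ k : ℚ) - x k := rfl
    rw [h1]
    push_cast
    ring
  have hgτ : ∀ j, 0 ≤ extR (τ j) g := by
    intro j
    rw [hg', extR_sum_smul]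
    refine Finset.sum_nonneg fun l _ => ?_
    rw [extR_toR]
    have h1 : (0:ℝ) ≤ (τ j (ρ l) : ℝ) := by exact_mod_cast hτρ j l
    have h2 := Int.fract_nonneg (e l)
    positivity
  have hxRτ : ∀ j, 0 ≤ extR (τ j) xR := by
    intro j
    rw [hxR, extQ_cast]
    exact_mod_cast hxnn j
  have hb₀z : toR (b₀ - z₀) = xR + g := by
    rw [toR_sub, hbsplit, hsplit2]
    abel
  have hb₀zQ : b₀ - z₀ ∈ Q := by
    rw [hQmem]
    intro j
    have h1 : ((τ j (b₀ - z₀) : ℤ) : ℝ) = extR (τ j) (xR + g) := by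
      rw [← hb₀z, extR_toR]
    rw [extR_add] at h1
    have h2 : (0:ℝ) ≤ ((τ j (b₀ - z₀) : ℤ) : ℝ) := by
      rw [h1]
      have := hxRτ j
      have := hgτ j
      linarith
    exact_mod_cast h2
  have hb₀zτ : α ≤ τ i (b₀ - z₀) := by
    have h1 : ((τ i (b₀ - z₀) : ℤ) : ℝ) = extR (τ i) (xR + g) := by
      rw [← hb₀z, extR_toR]
    rw [extR_add, hxRH] at h1
    have h2 : (α:ℝ) ≤ ((τ i (b₀ - z₀) : ℤ) : ℝ) := by
      rw [h1]
      have := hgτ i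
      linarith
    exact_mod_cast h2
  have hz₀0 : z₀ = 0 := hmin z₀ hz₀Q hb₀zQ hb₀zτ
  have hfinal : toR b₀ = xR + g := by
    rw [hbsplit, hsplit2, hz₀0]
    have : toR (0 : Fin d → ℤ) = 0 := by funext k; simp [toR]
    rw [this]
    abel
  refine ⟨i, hiF, D, hDface, hgood, b₀, zs, hzsQ, by rw [hb₀def]; ring, ?_⟩
  rw [hfinal]
  exact Set.add_mem_add ⟨hxRH, hxRspan⟩ hgG
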